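/- Assume the weights are ordered-edge compatible: for all edges e₁, e₂ ∈ E, w_A(e₁) < w_A(e₂) if and only if w_B(e₁) < w_B(e₂). For K ∈ {A,B}, let m(w_K) be the greatest nonnegative integer t such that s_A and s_B lie in different connected components of the spanning subgraph of G with edge set { e ∈ E : w_K(e) ≤ t } (such t exists since weights are positive integers, s_A ≠ s_B, and G is connected). Then for every node u, every path P_A from s_A to u and every path P_B from s_B to u, either some edge e of P_A satisfies w_A(e) > min{ m(w_A), m(w_B) }, or some edge e of P_B satisfies w_B(e) > min{ m(w_B), m(w_A) }. In particular, max{ Σ_{e ∈ P_A} w_A(e), Σ_{e ∈ P_B} w_B(e) } > min{ m(w_A), m(w_B) }. -/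

import Mathlib

open SimpleGraph

/-- `m(w)`: the greatest nonnegative integer `t` such that `s_A` and `s_B` lie in
different connected components of the spanning subgraph of `G` whose edges are the
edges `e` with `w(e) ≤ t` (i.e. after deleting the edges with `w(e) > t`). -/
noncomputable def cutVal {V : Type*} (G : SimpleGraph V) (w : Sym2 V → ℕ) (sA sB : V) : ℕ :=
  sSup {t : ℕ | ¬ (G.deleteEdges {e : Sym2 V | t < w e}).Reachable sA sB}

/-- Ordered edges case with positive integer weights. For every node `u`, every path
`p_A` from `s_A` to `u` and every path `p_B` from `s_B` to `u`, some edge of `p_A` has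
`w_A`-weight above `min{m(w_A), m(w_B)}`, or some edge of `p_B` has `w_B`-weight above
`min{m(w_A), m(w_B)}`; in particular
`max{Σ_{e ∈ p_A} w_A(e), Σ_{e ∈ p_B} w_B(e)} > min{m(w_A), m(w_B)}`. -/
lemma cutVal_mem {V : Type*} [Fintype V] (G : SimpleGraph V) (hconn : G.Connected)
    (w : Sym2 V → ℕ) (hpos : ∀ e ∈ G.edgeSet, 0 < w e) (sA sB : V) (hne : sA ≠ sB) :
    (¬ (G.deleteEdges {e : Sym2 V | cutVal G w sA sB < w e}).Reachable sA sB) ∧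
    ∀ t, cutVal G w sA sB < t → (G.deleteEdges {e : Sym2 V | t < w e}).Reachable sA sB := by
  classical
  set S := {t : ℕ | ¬ (G.deleteEdges {e : Sym2 V | t < w e}).Reachable sA sB} with hS
  have hfin : G.edgeSet.Finite := Set.toFinite _
  set N := hfin.toFinset.sup w with hN
  have hbig : ∀ t, N ≤ t → (G.deleteEdges {e : Sym2 V | t < w e}).Reachable sA sB := by
    intro t ht
    have : G.deleteEdges {e : Sym2 V | t < w e} = G := by
      ext a b
      simp only [deleteEdges_adj, Set.mem_setOf_eq, and_iff_left_iff_imp]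
      intro h
      exact not_lt.2 (le_trans (Finset.le_sup (hfin.mem_toFinset.2 h)) ht)
    rw [this]; exact hconn sA sB
  have hbdd : BddAbove S := by
    refine ⟨N, fun t ht => ?_⟩
    by_contra hlt
    exact ht (hbig t (le_of_lt (not_le.1 hlt)))
  have h0 : (0 : ℕ) ∈ S := by
    intro hreach
    have : G.deleteEdges {e : Sym2 V | 0 < w e} = ⊥ := by
      ext a b
      simp only [deleteEdges_adj, Set.mem_setOf_eq, bot_adj, iff_false, not_and, not_not]
      intro h
      exact hpos _ h
    rw [this] at hreach
    exact hne (reachable_bot.1 hreach)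
  have hmem : cutVal G w sA sB ∈ S := Nat.sSup_mem ⟨0, h0⟩ hbdd
  refine ⟨hmem, fun t ht => ?_⟩
  by_contra hreach
  exact absurd (le_csSup hbdd hreach) (not_le.2 ht)

theorem stmt_6 {V : Type*} [Fintype V] (G : SimpleGraph V) (hconn : G.Connected)
    (wA wB : Sym2 V → ℕ)
    (hposA : ∀ e ∈ G.edgeSet, 0 < wA e) (hposB : ∀ e ∈ G.edgeSet, 0 < wB e)
    (sA sB : V) (hne : sA ≠ sB)
    (hord : ∀ e₁ ∈ G.edgeSet, ∀ e₂ ∈ G.edgeSet, (wA e₁ < wA e₂ ↔ wB e₁ < wB e₂))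
    (u : V) (pA : G.Walk sA u) (hpA : pA.IsPath) (pB : G.Walk sB u) (hpB : pB.IsPath) :
    ((∃ e ∈ pA.edges, min (cutVal G wA sA sB) (cutVal G wB sA sB) < wA e) ∨
     (∃ e ∈ pB.edges, min (cutVal G wB sA sB) (cutVal G wA sA sB) < wB e)) ∧
    min (cutVal G wA sA sB) (cutVal G wB sA sB)
        < max ((pA.edges.map wA).sum) ((pB.edges.map wB).sum) := by
  classical
  obtain ⟨hcutA, hbigA⟩ := cutVal_mem G hconn wA hposA sA sB hne
  obtain ⟨hcutB, hbigB⟩ := cutVal_mem G hconn wB hposB sA sB hne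
  set mA := cutVal G wA sA sB with hmA
  set mB := cutVal G wB sA sB with hmB
  -- characterization: t ≤ cutVal iff not reachable at t
  have hleA : ∀ t : ℕ, ¬ (G.deleteEdges {e : Sym2 V | t < wA e}).Reachable sA sB → t ≤ mA := by
    intro t h; by_contra hlt; exact h (hbigA t (not_le.1 hlt))
  have hleB : ∀ t : ℕ, ¬ (G.deleteEdges {e : Sym2 V | t < wB e}).Reachable sA sB → t ≤ mB := by
    intro t h; by_contra hlt; exact h (hbigB t (not_le.1 hlt))
  -- the two edge-level graphs agree
  have hgeq : ∀ e ∈ G.edgeSet,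
      G.deleteEdges {f : Sym2 V | wA e < wA f} = G.deleteEdges {f : Sym2 V | wB e < wB f} := by
    intro e he
    ext a b
    simp only [deleteEdges_adj, Set.mem_setOf_eq, and_congr_right_iff]
    intro hab
    rw [hord e he _ (G.mem_edgeSet.2 hab)]
  -- key claim
  have hclaim : ∀ e ∈ G.edgeSet, (wA e ≤ mA ↔ wB e ≤ mB) := by
    intro e he
    have h1 : ∀ (w : Sym2 V → ℕ) (m : ℕ),
        ¬ (G.deleteEdges {f : Sym2 V | m < w f}).Reachable sA sB → w e ≤ m →
        ¬ (G.deleteEdges {f : Sym2 V | w e < w f}).Reachable sA sB := by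
      intro w m hm hwe hr
      exact hm (hr.mono (G.deleteEdges_anti (fun f hf => lt_of_le_of_lt hwe hf)))
    constructor
    · intro hA
      refine hleB (wB e) ?_
      rw [← hgeq e he]
      exact h1 wA mA hcutA hA
    · intro hB
      refine hleA (wA e) ?_
      rw [hgeq e he]
      exact h1 wB mB hcutB hB
  -- main disjunction
  have hmain : (∃ e ∈ pA.edges, min mA mB < wA e) ∨ (∃ e ∈ pB.edges, min mB mA < wB e) := by
    by_contra hcon
    push_neg at hcon
    obtain ⟨hA, hB⟩ := hcon
    rcases le_total mA mB with hle | hle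
    · -- min = mA; build walk sA → sB in deleteEdges {mA < wA ·}
      have hAedges : ∀ e ∈ (pA.append pB.reverse).edges, e ∉ {f : Sym2 V | mA < wA f} := by
        intro e hmem
        rw [Walk.edges_append, List.mem_append] at hmem
        rcases hmem with h | h
        · exact not_lt.2 ((hA e h).trans_eq (min_eq_left hle))
        · rw [Walk.edges_reverse, List.mem_reverse] at h
          have heE := pB.edges_subset_edgeSet h
          have : wB e ≤ mB := ((hB e h).trans_eq (min_eq_right hle)).trans hle
          exact not_lt.2 ((hclaim e heE).2 this)
      exact hcutA ((pA.append pB.reverse).toDeleteEdges _ hAedges).reachable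
    · have hBedges : ∀ e ∈ (pB.append pA.reverse).edges, e ∉ {f : Sym2 V | mB < wB f} := by
        intro e hmem
        rw [Walk.edges_append, List.mem_append] at hmem
        rcases hmem with h | h
        · exact not_lt.2 ((hB e h).trans_eq (min_eq_left hle))
        · rw [Walk.edges_reverse, List.mem_reverse] at h
          have heE := pA.edges_subset_edgeSet h
          have : wA e ≤ mA := ((hA e h).trans_eq (min_eq_right hle)).trans hle
          exact not_lt.2 ((hclaim e heE).1 this)
      exact hcutB ((pB.append pA.reverse).toDeleteEdges _ hBedges).reachable.symm
  refine ⟨hmain, ?_⟩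
  rcases hmain with ⟨e, he, hlt⟩ | ⟨e, he, hlt⟩
  · exact lt_of_lt_of_le hlt (le_trans (List.single_le_sum (fun x _ => Nat.zero_le x) _
      (List.mem_map_of_mem (f := wA) he)) (le_max_left _ _))
  · rw [min_comm] at hlt
    exact lt_of_lt_of_le hlt (le_trans (List.single_le_sum (fun x _ => Nat.zero_le x) _
      (List.mem_map_of_mem (f := wB) he)) (le_max_right _ _))
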